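/- Let C be a Delsarte code in the space of m×n matrices over 𝔽_q. Then P(C^⊥) = P(C)*, i.e. for every X ∈ Σ(E), ρ_{C^⊥}(X) = ρ_C(X^⊥) + m·dim X − ρ_C(E). -/

import Mathlib

set_option linter.unusedSectionVars false

open Module Matrix

variable {F : Type*} [Field F] [Fintype F] {n : ℕ}

/-- The orthogonal complement of a subspace of `𝔽_q^n` with respect to the standard dot product. -/
def perp (X : Submodule F (Fin n → F)) : Submodule F (Fin n → F) where
  carrier := {x | ∀ y ∈ X, dotProduct x y = 0}
  add_mem' := fun {a b} ha hb y hy => by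
    rw [Set.mem_setOf_eq] at *
    rw [add_dotProduct, ha y hy, hb y hy, add_zero]
  zero_mem' := fun y hy => zero_dotProduct y
  smul_mem' := fun c a ha y hy => by
    rw [Set.mem_setOf_eq] at *
    rw [smul_dotProduct, ha y hy, smul_zero]

/-- The dual rank function `ρ*(X) = ρ(X^⊥) + m·dim X − ρ(E)`. -/
noncomputable def dualRho (m : ℕ) (rho : Submodule F (Fin n → F) → ℤ) (X : Submodule F (Fin n → F)) : ℤ :=
  rho (perp X) + (m : ℤ) * (finrank F X : ℤ) - rho ⊤

/-- The nullity function `ν(X) = m·dim X − ρ(X)`. -/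
noncomputable def nullity (m : ℕ) (rho : Submodule F (Fin n → F) → ℤ) (X : Submodule F (Fin n → F)) : ℤ :=
  (m : ℤ) * (finrank F X : ℤ) - rho X

/-- The conullity function `ν*(X) = ρ(E) − ρ(X^⊥)`. -/
def coNull (rho : Submodule F (Fin n → F) → ℤ) (X : Submodule F (Fin n → F)) : ℤ :=
  rho ⊤ - rho (perp X)

/-- The `r`-th generalized weight `d_r = min{dim X : ν*(X) ≥ r}`. -/
noncomputable def genW (rho : Submodule F (Fin n → F) → ℤ) (r : ℤ) : ℕ :=
  sInf {d : ℕ | ∃ X : Submodule F (Fin n → F), finrank F X = d ∧ r ≤ coNull rho X}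

/-- `h(x) = max{ν(X) : dim X = x}`. -/
noncomputable def hFun (m : ℕ) (rho : Submodule F (Fin n → F) → ℤ) (x : ℕ) : ℤ :=
  sSup {v : ℤ | ∃ X : Submodule F (Fin n → F), finrank F X = x ∧ v = nullity m rho X}

/-- `h*(x) = max{ν*(X) : dim X = x}`. -/
noncomputable def hStar (rho : Submodule F (Fin n → F) → ℤ) (x : ℕ) : ℤ :=
  sSup {v : ℤ | ∃ X : Submodule F (Fin n → F), finrank F X = x ∧ v = coNull rho X}

/-- A `(q,m)`-polymatroid on `E = 𝔽_q^n`. -/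
structure QMPolymatroid (F : Type*) [Field F] [Fintype F] (n m : ℕ) where
  rho : Submodule F (Fin n → F) → ℤ
  rho_nonneg : ∀ X, 0 ≤ rho X
  rho_le : ∀ X, rho X ≤ (m : ℤ) * (finrank F X : ℤ)
  rho_mono : ∀ ⦃X Y⦄, X ≤ Y → rho X ≤ rho Y
  rho_submodular : ∀ X Y, rho (X ⊔ Y) + rho (X ⊓ Y) ≤ rho X + rho Y

/-- A `(q,m)`-demi-polymatroid on `E = 𝔽_q^n`. -/
structure QMDemiPolymatroid (F : Type*) [Field F] [Fintype F] (n m : ℕ) where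
  rho : Submodule F (Fin n → F) → ℤ
  rho_nonneg : ∀ X, 0 ≤ rho X
  rho_le : ∀ X, rho X ≤ (m : ℤ) * (finrank F X : ℤ)
  rho_mono : ∀ ⦃X Y⦄, X ≤ Y → rho X ≤ rho Y
  dual_nonneg : ∀ X, 0 ≤ dualRho m rho X
  dual_le : ∀ X, dualRho m rho X ≤ (m : ℤ) * (finrank F X : ℤ)
  dual_mono : ∀ ⦃X Y⦄, X ≤ Y → dualRho m rho X ≤ dualRho m rho Y

section Codes

variable {m : ℕ}

/-- The row space of a matrix. -/
def rowSpace (A : Matrix (Fin m) (Fin n) F) : Submodule F (Fin n → F) :=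
  Submodule.span F (Set.range A)

theorem rowSpace_le_iff (A : Matrix (Fin m) (Fin n) F) (X : Submodule F (Fin n → F)) :
    rowSpace A ≤ X ↔ ∀ i, A i ∈ X := by
  rw [rowSpace, Submodule.span_le]; exact Set.range_subset_iff

/-- Matrices whose row space is contained in `X`. -/
def supportedOn (m : ℕ) (X : Submodule F (Fin n → F)) :
    Submodule F (Matrix (Fin m) (Fin n) F) where
  carrier := {A | rowSpace A ≤ X}
  add_mem' := fun {A B} hA hB => by
    rw [Set.mem_setOf_eq, rowSpace_le_iff] at *
    exact fun i => X.add_mem (hA i) (hB i)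
  zero_mem' := by
    rw [Set.mem_setOf_eq, rowSpace_le_iff]
    exact fun i => X.zero_mem
  smul_mem' := fun c A hA => by
    rw [Set.mem_setOf_eq, rowSpace_le_iff] at *
    exact fun i => X.smul_mem c (hA i)

/-- `C(X)`: the subspace of a Delsarte code `C` of matrices whose row space lies in `X`. -/
def subcode (C : Submodule F (Matrix (Fin m) (Fin n) F)) (X : Submodule F (Fin n → F)) :
    Submodule F (Matrix (Fin m) (Fin n) F) :=
  C ⊓ supportedOn m X

/-- The rank function `ρ_C(X) = dim C − dim C(X^⊥)` of a Delsarte code. -/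
noncomputable def rhoC (C : Submodule F (Matrix (Fin m) (Fin n) F))
    (X : Submodule F (Fin n → F)) : ℤ :=
  (finrank F C : ℤ) - (finrank F (subcode C (perp X)) : ℤ)

/-- The generalized weight `d_r(C) = min{dim X : dim C(X) ≥ r}` of a Delsarte code. -/
noncomputable def codeWeight (C : Submodule F (Matrix (Fin m) (Fin n) F)) (r : ℤ) : ℕ :=
  sInf {d : ℕ | ∃ X : Submodule F (Fin n → F),
    finrank F X = d ∧ r ≤ (finrank F (subcode C X) : ℤ)}

/-- The trace dual of a Delsarte code. -/
def traceDual (C : Submodule F (Matrix (Fin m) (Fin n) F)) :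
    Submodule F (Matrix (Fin m) (Fin n) F) where
  carrier := {N | ∀ M ∈ C, Matrix.trace (M * Nᵀ) = 0}
  add_mem' := fun {N₁ N₂} h1 h2 M hM => by
    rw [Matrix.transpose_add, Matrix.mul_add, Matrix.trace_add, h1 M hM, h2 M hM, add_zero]
  zero_mem' := fun M hM => by simp
  smul_mem' := fun c N hN M hM => by
    rw [Matrix.transpose_smul, Matrix.mul_smul, Matrix.trace_smul, hN M hM, smul_zero]

/-- The transposed code `Cᵀ = {Mᵗ : M ∈ C}` of a code of square matrices. -/
def transposeCode (C : Submodule F (Matrix (Fin n) (Fin n) F)) :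
    Submodule F (Matrix (Fin n) (Fin n) F) where
  carrier := {A | Aᵀ ∈ C}
  add_mem' := fun {A B} hA hB => by
    rw [Set.mem_setOf_eq, Matrix.transpose_add]; exact C.add_mem hA hB
  zero_mem' := by
    rw [Set.mem_setOf_eq, Matrix.transpose_zero]; exact C.zero_mem
  smul_mem' := fun c A hA => by
    rw [Set.mem_setOf_eq, Matrix.transpose_smul]; exact C.smul_mem c hA

/-- The maximum rank of a matrix in a subspace of matrices. -/
noncomputable def maxrank (A : Submodule F (Matrix (Fin m) (Fin n) F)) : ℕ :=
  sSup {r : ℕ | ∃ M ∈ A, M.rank = r}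

/-- An optimal anticode: a subspace `𝒜` of `𝕄` with `dim 𝒜 = m · maxrank 𝒜`. -/
def IsOptimalAnticode (A : Submodule F (Matrix (Fin m) (Fin n) F)) : Prop :=
  finrank F A = m * maxrank A

/-- Ravagnani's generalized weight `a_r(C)`. -/
noncomputable def aWeight (C : Submodule F (Matrix (Fin m) (Fin n) F)) (r : ℤ) : ℕ :=
  (sInf {d : ℕ | ∃ A : Submodule F (Matrix (Fin m) (Fin n) F),
    IsOptimalAnticode A ∧ finrank F A = d ∧ r ≤ (finrank F (A ⊓ C : Submodule F _) : ℤ)}) / m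

end Codes

section MyAux

variable {F : Type*} [Field F] [Fintype F] {n m : ℕ}

lemma my_mem_perp {X : Submodule F (Fin n → F)} {x : Fin n → F} :
    x ∈ perp X ↔ ∀ y ∈ X, dotProduct x y = 0 := Iff.rfl

lemma my_mem_supportedOn {X : Submodule F (Fin n → F)} {A : Matrix (Fin m) (Fin n) F} :
    A ∈ supportedOn m X ↔ ∀ i, A i ∈ X := by
  rw [← rowSpace_le_iff]; rfl

lemma my_mem_traceDual {C : Submodule F (Matrix (Fin m) (Fin n) F)}
    {N : Matrix (Fin m) (Fin n) F} :
    N ∈ traceDual C ↔ ∀ M ∈ C, Matrix.trace (M * Nᵀ) = 0 := Iff.rfl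

/-- A generic rank computation for the preimage of a dual annihilator under an injective
map into the dual space. -/
lemma my_finrank_comap_dualAnnihilator {V : Type*} [AddCommGroup V] [Module F V]
    [FiniteDimensional F V] (f : V →ₗ[F] Module.Dual F V) (hf : Function.Injective f)
    (U : Submodule F V) :
    finrank F (Submodule.comap f U.dualAnnihilator) + finrank F U = finrank F V := by
  have hd : finrank F V = finrank F (Module.Dual F V) := (Subspace.dual_finrank_eq).symm
  let e := f.linearEquivOfInjective hf hd
  have he : (e : V →ₗ[F] Module.Dual F V) = f :=
    LinearMap.ext fun x => f.linearEquivOfInjective_apply hf hd x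
  rw [← he, Submodule.comap_equiv_eq_map_symm, LinearEquiv.finrank_map_eq]
  rw [← (Subspace.quotEquivAnnihilator U).finrank_eq, Submodule.finrank_quotient_add_finrank]

/-- The dot-product pairing map to the dual. -/
noncomputable def myDotMap (F : Type*) [Field F] (n : ℕ) :
    (Fin n → F) →ₗ[F] Module.Dual F (Fin n → F) where
  toFun x :=
    { toFun := fun y => dotProduct x y
      map_add' := fun a b => by simp [dotProduct_add]
      map_smul' := fun c a => by simp [dotProduct_smul] }
  map_add' := fun a b => by ext y; simp [add_dotProduct]
  map_smul' := fun c a => by ext y; simp [smul_dotProduct]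

lemma myDotMap_injective : Function.Injective (myDotMap F n) := by
  intro a b hab
  funext i
  have := congrArg (fun f => f (Pi.single i 1)) hab
  simpa [myDotMap, dotProduct_single] using this

lemma my_perp_eq_comap (X : Submodule F (Fin n → F)) :
    perp X = Submodule.comap (myDotMap F n) X.dualAnnihilator := by
  ext x
  simp only [my_mem_perp, Submodule.mem_comap, Submodule.mem_dualAnnihilator]
  rfl

lemma my_finrank_perp (X : Submodule F (Fin n → F)) :
    finrank F (perp X) + finrank F X = n := by
  rw [my_perp_eq_comap]
  have h := my_finrank_comap_dualAnnihilator (myDotMap F n) myDotMap_injective X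
  simpa using h

lemma my_perp_perp (X : Submodule F (Fin n → F)) : perp (perp X) = X := by
  have hle : X ≤ perp (perp X) := by
    intro x hx
    rw [my_mem_perp]
    intro y hy
    rw [dotProduct_comm]
    exact hy x hx
  refine (Submodule.eq_of_le_of_finrank_le hle ?_).symm
  have h1 := my_finrank_perp (perp X)
  have h2 := my_finrank_perp X
  omega

lemma my_perp_top : perp (⊤ : Submodule F (Fin n → F)) = ⊥ := by
  rw [eq_bot_iff]
  intro x hx
  rw [my_mem_perp] at hx
  have : x = 0 := by
    funext i
    simpa [dotProduct_single] using hx (Pi.single i 1) trivial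
  simp [this]

/-- The trace pairing map to the dual. -/
noncomputable def myTraceMap (F : Type*) [Field F] (m n : ℕ) :
    Matrix (Fin m) (Fin n) F →ₗ[F] Module.Dual F (Matrix (Fin m) (Fin n) F) where
  toFun N :=
    { toFun := fun M => Matrix.trace (M * Nᵀ)
      map_add' := fun a b => by simp [Matrix.add_mul]
      map_smul' := fun c a => by simp [Matrix.smul_mul] }
  map_add' := fun a b => by
    ext M; simp [Matrix.transpose_add, Matrix.mul_add]
  map_smul' := fun c a => by
    ext M; simp [Matrix.transpose_smul, Matrix.mul_smul]

lemma my_trace_mul_transpose (M N : Matrix (Fin m) (Fin n) F) :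
    Matrix.trace (M * Nᵀ) = ∑ i, dotProduct (M i) (N i) := by
  simp [Matrix.trace, Matrix.diag, Matrix.mul_apply, dotProduct]

lemma my_trace_single (i : Fin m) (y : Fin n → F) (N : Matrix (Fin m) (Fin n) F) :
    Matrix.trace ((Matrix.of (Pi.single i y)) * Nᵀ) = dotProduct y (N i) := by
  rw [my_trace_mul_transpose]
  rw [Finset.sum_eq_single i]
  · show (Pi.single i y : Fin m → Fin n → F) i ⬝ᵥ N i = y ⬝ᵥ N i
    rw [Pi.single_eq_same]
  · intro k _ hk
    show (Pi.single i y : Fin m → Fin n → F) k ⬝ᵥ N k = 0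
    rw [Pi.single_eq_of_ne hk, zero_dotProduct]
  · intro h
    exact absurd (Finset.mem_univ i) h

lemma myTraceMap_injective : Function.Injective (myTraceMap F m n) := by
  have : ∀ N : Matrix (Fin m) (Fin n) F, myTraceMap F m n N = 0 → N = 0 := by
    intro N hN
    funext i j
    have h := congrArg (fun f => f (Matrix.of (Pi.single i (Pi.single j 1)))) hN
    simp only [myTraceMap, LinearMap.coe_mk, AddHom.coe_mk, LinearMap.zero_apply] at h
    rw [my_trace_single] at h
    simpa [single_dotProduct] using h
  intro a b hab
  have : a - b = 0 := this _ (by rw [map_sub, hab, sub_self])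
  exact sub_eq_zero.mp this

lemma my_traceDual_eq_comap (C : Submodule F (Matrix (Fin m) (Fin n) F)) :
    traceDual C = Submodule.comap (myTraceMap F m n) C.dualAnnihilator := by
  ext N
  simp only [my_mem_traceDual, Submodule.mem_comap, Submodule.mem_dualAnnihilator]
  rfl

lemma my_finrank_traceDual (C : Submodule F (Matrix (Fin m) (Fin n) F)) :
    finrank F (traceDual C) + finrank F C = m * n := by
  rw [my_traceDual_eq_comap]
  have h := my_finrank_comap_dualAnnihilator (myTraceMap F m n) myTraceMap_injective C
  rw [h]
  simp [Module.finrank_matrix]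

lemma my_traceDual_sup (A B : Submodule F (Matrix (Fin m) (Fin n) F)) :
    traceDual (A ⊔ B) = traceDual A ⊓ traceDual B := by
  rw [my_traceDual_eq_comap, my_traceDual_eq_comap, my_traceDual_eq_comap,
    Submodule.dualAnnihilator_sup_eq, Submodule.comap_inf]

lemma my_traceDual_supportedOn (X : Submodule F (Fin n → F)) :
    traceDual (supportedOn m X) = supportedOn m (perp X) := by
  ext N
  rw [my_mem_traceDual, my_mem_supportedOn]
  constructor
  · intro h i
    rw [my_mem_perp]
    intro y hy
    have hM : (Matrix.of (Pi.single i y) : Matrix (Fin m) (Fin n) F) ∈ supportedOn m X := by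
      rw [my_mem_supportedOn]
      intro k
      show (Pi.single i y : Fin m → Fin n → F) k ∈ X
      by_cases hk : k = i
      · subst hk; rw [Pi.single_eq_same]; exact hy
      · rw [Pi.single_eq_of_ne hk]; exact X.zero_mem
    have := h _ hM
    rw [my_trace_single] at this
    rw [dotProduct_comm]
    exact this
  · intro h M hM
    rw [my_trace_mul_transpose]
    apply Finset.sum_eq_zero
    intro k _
    rw [dotProduct_comm]
    exact (h k) (M k) ((my_mem_supportedOn.mp hM) k)

/-- Row-wise equivalence of `supportedOn m X` with `Fin m → X`. -/
noncomputable def mySuppEquiv (X : Submodule F (Fin n → F)) :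
    (supportedOn m X) ≃ₗ[F] (Fin m → X) where
  toFun A i := ⟨(A : Matrix (Fin m) (Fin n) F) i, (my_mem_supportedOn.mp A.2) i⟩
  map_add' := fun a b => rfl
  map_smul' := fun c a => rfl
  invFun f := ⟨Matrix.of (fun i => (f i : Fin n → F)),
    my_mem_supportedOn.mpr fun i => (f i).2⟩
  left_inv := fun A => rfl
  right_inv := fun f => rfl

lemma my_finrank_supportedOn (X : Submodule F (Fin n → F)) :
    finrank F (supportedOn m X) = m * finrank F X := by
  rw [(mySuppEquiv X).finrank_eq]
  simp [Module.finrank_pi_fintype]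

lemma my_subcode_bot (C : Submodule F (Matrix (Fin m) (Fin n) F)) :
    subcode C (⊥ : Submodule F (Fin n → F)) = ⊥ := by
  rw [eq_bot_iff]
  rintro A ⟨-, hS⟩
  have := my_mem_supportedOn.mp hS
  have : A = 0 := by
    funext i j
    have := (Submodule.mem_bot F).mp (this i)
    simp [this]
  simp [this]

end MyAux

/-- `P(C^⊥) = P(C)*`, i.e. `ρ_{C^⊥}(X) = ρ_C(X^⊥) + m·dim X − ρ_C(E)`. -/
theorem traceDual_rho_eq_dualRho {F : Type*} [Field F] [Fintype F] {n m : ℕ}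
    (C : Submodule F (Matrix (Fin m) (Fin n) F)) (X : Submodule F (Fin n → F)) :
    rhoC (traceDual C) X = rhoC C (perp X) + (m : ℤ) * (finrank F X : ℤ) - rhoC C ⊤ := by
  have hsub : subcode (traceDual C) (perp X) = traceDual (C ⊔ supportedOn m X) := by
    rw [my_traceDual_sup, subcode, ← my_traceDual_supportedOn]
  have hCsub : subcode C (perp (perp X)) = C ⊓ supportedOn m X := by
    rw [my_perp_perp]; rfl
  have hCtop : subcode C (perp (⊤ : Submodule F (Fin n → F))) = ⊥ := by
    rw [my_perp_top, my_subcode_bot]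
  have h1 := my_finrank_traceDual C
  have h2 := my_finrank_traceDual (C ⊔ supportedOn m X)
  have h3 := Submodule.finrank_sup_add_finrank_inf_eq C (supportedOn m X)
  have h4 := my_finrank_supportedOn (m := m) X
  rw [rhoC, rhoC, rhoC, hsub, hCsub, hCtop]
  rw [h4] at h3
  have h5 : finrank F (⊥ : Submodule F (Matrix (Fin m) (Fin n) F)) = 0 := finrank_bot F _
  rw [h5]
  push_cast
  omega
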